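/- arXiv:1108.3734 — 2 statements merged into one kernel-verified Lean document; each statement's English description precedes it below -/
import Mathlib

section
/- In (L, B, k) as below: (i) the group G of K-isometries of (L, B, k) is finite of order 120; (ii) the sequence (D₁, D₂, D₃, D₄, D₅, D₆, D₇) is a toric system of length 7 in (L, B, k); (iii) the map from G to sequences in L sending φ to (φ(D₁), …, φ(D₇)) is injective, so the orbit of the standard toric system under G consists of exactly 120 distinct toric systems. -/
/- The Picard lattice of the toric surface `X = TV(-2,-1,-1,-1,-1,-2,-1)`:
`L = ℤ⁵` with basis `(D₂, D₃, D₄, D₅, D₇)` and the intersection pairing given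
by the Gram matrix below; `D₁ = -D₂ + D₄ + D₅ - D₇`, `D₆ = D₂ + D₃ - D₅ - D₇`,
and the canonical class is `k = -(D₁ + ⋯ + D₇)`. -/

/-- Gram matrix of the intersection pairing in the basis `(D₂, D₃, D₄, D₅, D₇)`. -/
def gram : Matrix (Fin 5) (Fin 5) ℤ :=
  !![-1, 1, 0, 0, 0;
      1, -1, 1, 0, 0;
      0, 1, -1, 1, 0;
      0, 0, 1, -1, 0;
      0, 0, 0, 0, -1]

/-- The intersection pairing on `L = ℤ⁵`. -/
def picForm (x y : Fin 5 → ℤ) : ℤ := dotProduct x (gram.mulVec y)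

def vD2 : Fin 5 → ℤ := ![1, 0, 0, 0, 0]
def vD3 : Fin 5 → ℤ := ![0, 1, 0, 0, 0]
def vD4 : Fin 5 → ℤ := ![0, 0, 1, 0, 0]
def vD5 : Fin 5 → ℤ := ![0, 0, 0, 1, 0]
def vD7 : Fin 5 → ℤ := ![0, 0, 0, 0, 1]
def vD1 : Fin 5 → ℤ := -vD2 + vD4 + vD5 - vD7
def vD6 : Fin 5 → ℤ := vD2 + vD3 - vD5 - vD7

/-- The canonical class `k = -(D₁ + D₂ + D₃ + D₄ + D₅ + D₆ + D₇)`. -/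
def vK : Fin 5 → ℤ := -(vD1 + vD2 + vD3 + vD4 + vD5 + vD6 + vD7)

/-- A `K`-isometry: a ℤ-linear automorphism of `L` preserving the intersection
pairing and fixing the canonical class. -/
def IsKIsometry (φ : (Fin 5 → ℤ) ≃ₗ[ℤ] (Fin 5 → ℤ)) : Prop :=
  (∀ x y, picForm (φ x) (φ y) = picForm x y) ∧ φ vK = vK

/-- A toric system of length `m ≥ 3` in `(L, picForm, vK)`: a cyclic sequence
(indices modulo `m`) with `B(A_i, A_{i+1}) = 1`, `B(A_i, A_j) = 0` for
cyclically non-adjacent distinct `i, j`, and `∑ A_i = -k`. -/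
def IsToricSystem {m : ℕ} [NeZero m] (A : Fin m → Fin 5 → ℤ) : Prop :=
  3 ≤ m ∧ (∀ i, picForm (A i) (A (i + 1)) = 1) ∧
    (∀ i j : Fin m, i ≠ j → j ≠ i + 1 → i ≠ j + 1 → picForm (A i) (A j) = 0) ∧
    ∑ i, A i = -vK

/-- The standard toric system `(D₁, …, D₇)`. -/
def stdSys : Fin 7 → Fin 5 → ℤ := ![vD1, vD2, vD3, vD4, vD5, vD6, vD7]

/-! ### Auxiliary machinery -/

open Matrix

/-- Explicit formula for the intersection pairing. -/
def pf (x y : Fin 5 → ℤ) : ℤ :=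
  x 0 * (-(y 0) + y 1) + x 1 * (y 0 - y 1 + y 2) + x 2 * (y 1 - y 2 + y 3) +
    x 3 * (y 2 - y 3) - x 4 * y 4

lemma picForm_eq (x y : Fin 5 → ℤ) : picForm x y = pf x y := by
  simp [picForm, pf, _root_.gram, Matrix.mulVec, dotProduct, Fin.sum_univ_five,
    Matrix.cons_val_zero, Matrix.cons_val_one, Matrix.cons_val_two, Matrix.cons_val_three,
    Matrix.cons_val_four, Matrix.head_cons, Matrix.head_fin_const, Matrix.vecHead,
    Matrix.vecTail]
  ring

lemma vK_lit : vK = ![-1, -2, -2, -1, 1] := by decide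

lemma picForm_vK (v : Fin 5 → ℤ) :
    picForm v vK = -(v 0) - v 1 - v 2 - v 3 - v 4 := by
  rw [picForm_eq, vK_lit]
  show v 0 * _ + _ + _ + _ - _ = _
  norm_num [Matrix.cons_val_zero, Matrix.cons_val_one, Matrix.cons_val_two,
    Matrix.cons_val_three, Matrix.cons_val_four, Matrix.head_cons, Matrix.vecHead,
    Matrix.vecTail]
  ring

def Slist : List (Fin 5 → ℤ) := [![-1, 0, 1, 1, 0], ![0, 0, 0, 0, 1], ![0, 0, 0, 1, 0], ![0, 0, 1, 0, 0], ![0, 0, 1, 1, -1], ![0, 1, 0, 0, 0], ![0, 1, 1, 0, -1], ![1, 0, 0, 0, 0], ![1, 1, 0, -1, 0], ![1, 1, 0, 0, -1]]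

def gm0 : Matrix (Fin 5) (Fin 5) ℤ := !![-1, 1, 0, 0, 0; 0, 0, 1, 0, 0; 1, 0, 0, 1, 0; 1, 0, 0, 0, 0; 0, 0, 0, 0, 1]
def gi0 : Matrix (Fin 5) (Fin 5) ℤ := !![0, 0, 0, 1, 0; 1, 0, 0, 1, 0; 0, 1, 0, 0, 0; 0, 0, 1, -1, 0; 0, 0, 0, 0, 1]
def gm1 : Matrix (Fin 5) (Fin 5) ℤ := !![-1, 1, 0, 0, 0; 0, 0, 1, 0, 0; 1, 0, 0, 1, 0; 1, 0, 0, 1, 1; 0, 0, 0, -1, 0]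
def gi1 : Matrix (Fin 5) (Fin 5) ℤ := !![0, 0, 1, 0, 1; 1, 0, 1, 0, 1; 0, 1, 0, 0, 0; 0, 0, 0, 0, -1; 0, 0, -1, 1, 0]
def gm2 : Matrix (Fin 5) (Fin 5) ℤ := !![-1, 1, 0, 0, 0; 0, 0, 1, 0, 0; 1, 0, 1, 0, 1; 1, 0, 0, 0, 0; 0, 0, -1, 1, 0]
def gi2 : Matrix (Fin 5) (Fin 5) ℤ := !![0, 0, 0, 1, 0; 1, 0, 0, 1, 0; 0, 1, 0, 0, 0; 0, 1, 0, 0, 1; 0, -1, 1, -1, 0]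
def gm3 : Matrix (Fin 5) (Fin 5) ℤ := !![-1, 1, 0, 0, 0; 0, 0, 1, 0, 0; 1, 0, 1, 0, 1; 1, 0, 0, 1, 1; 0, 0, -1, 0, -1]
def gi3 : Matrix (Fin 5) (Fin 5) ℤ := !![0, 0, 1, 0, 1; 1, 0, 1, 0, 1; 0, 1, 0, 0, 0; 0, 1, -1, 1, 0; 0, -1, 0, 0, -1]
def gm4 : Matrix (Fin 5) (Fin 5) ℤ := !![-1, 1, 0, 0, 0; 0, 1, 0, 0, 0; 1, 0, 0, 1, 0; 1, -1, 1, 0, 0; 0, 0, 0, 0, 1]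
def gi4 : Matrix (Fin 5) (Fin 5) ℤ := !![-1, 1, 0, 0, 0; 0, 1, 0, 0, 0; 1, 0, 0, 1, 0; 1, -1, 1, 0, 0; 0, 0, 0, 0, 1]
def gm5 : Matrix (Fin 5) (Fin 5) ℤ := !![-1, 1, 0, 0, 0; 0, 1, 0, 1, 1; 1, 0, 0, 1, 0; 1, -1, 1, 0, 0; 0, 0, 0, -1, 0]
def gi5 : Matrix (Fin 5) (Fin 5) ℤ := !![0, 0, 1, 0, 1; 1, 0, 1, 0, 1; 1, 0, 0, 1, 0; 0, 0, 0, 0, -1; -1, 1, -1, 0, 0]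
def gm6 : Matrix (Fin 5) (Fin 5) ℤ := !![-1, 1, 0, 0, 0; 0, 1, 0, 0, 0; 1, 0, 1, 0, 1; 1, -1, 1, 0, 0; 0, 0, -1, 1, 0]
def gi6 : Matrix (Fin 5) (Fin 5) ℤ := !![-1, 1, 0, 0, 0; 0, 1, 0, 0, 0; 1, 0, 0, 1, 0; 1, 0, 0, 1, 1; 0, -1, 1, -1, 0]
def gm7 : Matrix (Fin 5) (Fin 5) ℤ := !![-1, 1, 0, 0, 0; 0, 1, 0, 1, 1; 1, 0, 1, 0, 1; 1, -1, 1, 0, 0; 0, 0, -1, 0, -1]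
def gi7 : Matrix (Fin 5) (Fin 5) ℤ := !![0, 0, 1, 0, 1; 1, 0, 1, 0, 1; 1, 0, 0, 1, 0; 0, 1, -1, 1, 0; -1, 0, 0, -1, -1]
def gm8 : Matrix (Fin 5) (Fin 5) ℤ := !![-1, 1, 0, 0, 0; 0, 1, 0, 0, 0; 1, 0, 0, 1, 0; 1, 0, 0, 1, 1; 0, -1, 1, -1, 0]
def gi8 : Matrix (Fin 5) (Fin 5) ℤ := !![-1, 1, 0, 0, 0; 0, 1, 0, 0, 0; 1, 0, 1, 0, 1; 1, -1, 1, 0, 0; 0, 0, -1, 1, 0]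
def gm9 : Matrix (Fin 5) (Fin 5) ℤ := !![-1, 1, 0, 0, 0; 0, 1, 0, 1, 1; 1, 0, 0, 1, 0; 1, 0, 0, 0, 0; 0, -1, 1, -1, 0]
def gi9 : Matrix (Fin 5) (Fin 5) ℤ := !![0, 0, 0, 1, 0; 1, 0, 0, 1, 0; 1, 0, 1, 0, 1; 0, 0, 1, -1, 0; -1, 1, -1, 0, 0]
def gm10 : Matrix (Fin 5) (Fin 5) ℤ := !![-1, 1, 0, 0, 0; 0, 1, 0, 0, 0; 1, 0, 1, 0, 1; 1, 0, 0, 1, 1; 0, -1, 0, 0, -1]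
def gi10 : Matrix (Fin 5) (Fin 5) ℤ := !![-1, 1, 0, 0, 0; 0, 1, 0, 0, 0; 1, 0, 1, 0, 1; 1, 0, 0, 1, 1; 0, -1, 0, 0, -1]
def gm11 : Matrix (Fin 5) (Fin 5) ℤ := !![-1, 1, 0, 0, 0; 0, 1, 0, 1, 1; 1, 0, 1, 0, 1; 1, 0, 0, 0, 0; 0, -1, 0, 0, -1]
def gi11 : Matrix (Fin 5) (Fin 5) ℤ := !![0, 0, 0, 1, 0; 1, 0, 0, 1, 0; 1, 0, 1, 0, 1; 0, 1, 0, 0, 1; -1, 0, 0, -1, -1]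
def gm12 : Matrix (Fin 5) (Fin 5) ℤ := !![0, 0, 0, 0, -1; 0, 0, 1, 0, 0; 0, 1, 0, 1, 1; 0, 1, 0, 0, 1; 1, -1, 0, 0, 0]
def gi12 : Matrix (Fin 5) (Fin 5) ℤ := !![1, 0, 0, 1, 1; 1, 0, 0, 1, 0; 0, 1, 0, 0, 0; 0, 0, 1, -1, 0; -1, 0, 0, 0, 0]
def gm13 : Matrix (Fin 5) (Fin 5) ℤ := !![0, 0, 0, 1, 0; 0, 0, 1, 0, 0; 0, 1, 0, 0, 0; 0, 1, 0, 0, 1; 1, -1, 0, 0, 0]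
def gi13 : Matrix (Fin 5) (Fin 5) ℤ := !![0, 0, 1, 0, 1; 0, 0, 1, 0, 0; 0, 1, 0, 0, 0; 1, 0, 0, 0, 0; 0, 0, -1, 1, 0]
def gm14 : Matrix (Fin 5) (Fin 5) ℤ := !![0, 0, 1, -1, 0; 0, 0, 1, 0, 0; 0, 1, 0, 1, 1; 0, 1, -1, 1, 0; 1, -1, 0, 0, 0]
def gi14 : Matrix (Fin 5) (Fin 5) ℤ := !![1, 0, 0, 1, 1; 1, 0, 0, 1, 0; 0, 1, 0, 0, 0; -1, 1, 0, 0, 0; 0, -1, 1, -1, 0]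
def gm15 : Matrix (Fin 5) (Fin 5) ℤ := !![0, 0, 1, 0, 1; 0, 0, 1, 0, 0; 0, 1, 0, 0, 0; 0, 1, -1, 1, 0; 1, -1, 0, 0, 0]
def gi15 : Matrix (Fin 5) (Fin 5) ℤ := !![0, 0, 1, 0, 1; 0, 0, 1, 0, 0; 0, 1, 0, 0, 0; 0, 1, -1, 1, 0; 1, -1, 0, 0, 0]
def gm16 : Matrix (Fin 5) (Fin 5) ℤ := !![0, 0, 0, 0, -1; 0, 1, 0, 0, 0; 0, 1, 0, 1, 1; 0, 0, 1, 0, 1; 1, -1, 0, 0, 0]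
def gi16 : Matrix (Fin 5) (Fin 5) ℤ := !![0, 1, 0, 0, 1; 0, 1, 0, 0, 0; 1, 0, 0, 1, 0; 1, -1, 1, 0, 0; -1, 0, 0, 0, 0]
def gm17 : Matrix (Fin 5) (Fin 5) ℤ := !![0, 0, 0, 1, 0; 0, 1, 0, 1, 1; 0, 1, 0, 0, 0; 0, 0, 1, -1, 0; 1, -1, 0, 0, 0]
def gi17 : Matrix (Fin 5) (Fin 5) ℤ := !![0, 0, 1, 0, 1; 0, 0, 1, 0, 0; 1, 0, 0, 1, 0; 1, 0, 0, 0, 0; -1, 1, -1, 0, 0]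
def gm18 : Matrix (Fin 5) (Fin 5) ℤ := !![0, 0, 1, -1, 0; 0, 1, 0, 0, 0; 0, 1, 0, 1, 1; 0, 0, 0, 1, 0; 1, -1, 0, 0, 0]
def gi18 : Matrix (Fin 5) (Fin 5) ℤ := !![0, 1, 0, 0, 1; 0, 1, 0, 0, 0; 1, 0, 0, 1, 0; 0, 0, 0, 1, 0; 0, -1, 1, -1, 0]
def gm19 : Matrix (Fin 5) (Fin 5) ℤ := !![0, 0, 1, 0, 1; 0, 1, 0, 1, 1; 0, 1, 0, 0, 0; 0, 0, 0, 0, -1; 1, -1, 0, 0, 0]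
def gi19 : Matrix (Fin 5) (Fin 5) ℤ := !![0, 0, 1, 0, 1; 0, 0, 1, 0, 0; 1, 0, 0, 1, 0; 0, 1, -1, 1, 0; 0, 0, 0, -1, 0]
def gm20 : Matrix (Fin 5) (Fin 5) ℤ := !![0, 1, -1, 1, 0; 0, 1, 0, 0, 0; 0, 0, 1, 0, 0; 0, 0, 1, 0, 1; 1, -1, 0, 0, 0]
def gi20 : Matrix (Fin 5) (Fin 5) ℤ := !![0, 1, 0, 0, 1; 0, 1, 0, 0, 0; 0, 0, 1, 0, 0; 1, -1, 1, 0, 0; 0, 0, -1, 1, 0]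
def gm21 : Matrix (Fin 5) (Fin 5) ℤ := !![0, 1, -1, 1, 0; 0, 1, 0, 1, 1; 0, 0, 1, 0, 0; 0, 0, 1, -1, 0; 1, -1, 0, 0, 0]
def gi21 : Matrix (Fin 5) (Fin 5) ℤ := !![1, 0, 0, 1, 1; 1, 0, 0, 1, 0; 0, 0, 1, 0, 0; 0, 0, 1, -1, 0; -1, 1, -1, 0, 0]
def gm22 : Matrix (Fin 5) (Fin 5) ℤ := !![0, 1, 0, 0, 1; 0, 1, 0, 0, 0; 0, 0, 1, 0, 0; 0, 0, 0, 1, 0; 1, -1, 0, 0, 0]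
def gi22 : Matrix (Fin 5) (Fin 5) ℤ := !![0, 1, 0, 0, 1; 0, 1, 0, 0, 0; 0, 0, 1, 0, 0; 0, 0, 0, 1, 0; 1, -1, 0, 0, 0]
def gm23 : Matrix (Fin 5) (Fin 5) ℤ := !![0, 1, 0, 0, 1; 0, 1, 0, 1, 1; 0, 0, 1, 0, 0; 0, 0, 0, 0, -1; 1, -1, 0, 0, 0]
def gi23 : Matrix (Fin 5) (Fin 5) ℤ := !![1, 0, 0, 1, 1; 1, 0, 0, 1, 0; 0, 0, 1, 0, 0; -1, 1, 0, 0, 0; 0, 0, 0, -1, 0]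
def gm24 : Matrix (Fin 5) (Fin 5) ℤ := !![0, 0, 0, 0, -1; 0, 0, 1, 0, 0; 0, 1, 0, 1, 1; 1, 0, 0, 1, 1; 0, 0, 0, -1, 0]
def gi24 : Matrix (Fin 5) (Fin 5) ℤ := !![1, 0, 0, 1, 1; 1, 0, 1, 0, 1; 0, 1, 0, 0, 0; 0, 0, 0, 0, -1; -1, 0, 0, 0, 0]
def gm25 : Matrix (Fin 5) (Fin 5) ℤ := !![0, 0, 0, 1, 0; 0, 0, 1, 0, 0; 0, 1, 0, 0, 0; 1, 0, 0, 0, 0; 0, 0, 0, 0, 1]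
def gi25 : Matrix (Fin 5) (Fin 5) ℤ := !![0, 0, 0, 1, 0; 0, 0, 1, 0, 0; 0, 1, 0, 0, 0; 1, 0, 0, 0, 0; 0, 0, 0, 0, 1]
def gm26 : Matrix (Fin 5) (Fin 5) ℤ := !![0, 0, 1, -1, 0; 0, 0, 1, 0, 0; 0, 1, 0, 1, 1; 1, 0, 0, 1, 1; 0, 0, -1, 0, -1]
def gi26 : Matrix (Fin 5) (Fin 5) ℤ := !![1, 0, 0, 1, 1; 1, 0, 1, 0, 1; 0, 1, 0, 0, 0; -1, 1, 0, 0, 0; 0, -1, 0, 0, -1]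
def gm27 : Matrix (Fin 5) (Fin 5) ℤ := !![0, 0, 1, 0, 1; 0, 0, 1, 0, 0; 0, 1, 0, 0, 0; 1, 0, 0, 0, 0; 0, 0, -1, 1, 0]
def gi27 : Matrix (Fin 5) (Fin 5) ℤ := !![0, 0, 0, 1, 0; 0, 0, 1, 0, 0; 0, 1, 0, 0, 0; 0, 1, 0, 0, 1; 1, -1, 0, 0, 0]
def gm28 : Matrix (Fin 5) (Fin 5) ℤ := !![0, 0, 0, 0, -1; 0, 1, 0, 0, 0; 0, 1, 0, 1, 1; 1, 0, 0, 1, 1; 0, -1, 1, -1, 0]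
def gi28 : Matrix (Fin 5) (Fin 5) ℤ := !![0, 1, -1, 1, 0; 0, 1, 0, 0, 0; 1, 0, 1, 0, 1; 1, -1, 1, 0, 0; -1, 0, 0, 0, 0]
def gm29 : Matrix (Fin 5) (Fin 5) ℤ := !![0, 0, 0, 1, 0; 0, 1, 0, 1, 1; 0, 1, 0, 0, 0; 1, 0, 0, 0, 0; 0, -1, 1, -1, 0]
def gi29 : Matrix (Fin 5) (Fin 5) ℤ := !![0, 0, 0, 1, 0; 0, 0, 1, 0, 0; 1, 0, 1, 0, 1; 1, 0, 0, 0, 0; -1, 1, -1, 0, 0]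
def gm30 : Matrix (Fin 5) (Fin 5) ℤ := !![0, 0, 1, -1, 0; 0, 1, 0, 0, 0; 0, 1, 0, 1, 1; 1, 0, 0, 1, 1; 0, -1, 0, 0, -1]
def gi30 : Matrix (Fin 5) (Fin 5) ℤ := !![0, 1, -1, 1, 0; 0, 1, 0, 0, 0; 1, 0, 1, 0, 1; 0, 0, 1, 0, 1; 0, -1, 0, 0, -1]
def gm31 : Matrix (Fin 5) (Fin 5) ℤ := !![0, 0, 1, 0, 1; 0, 1, 0, 1, 1; 0, 1, 0, 0, 0; 1, 0, 0, 0, 0; 0, -1, 0, 0, -1]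
def gi31 : Matrix (Fin 5) (Fin 5) ℤ := !![0, 0, 0, 1, 0; 0, 0, 1, 0, 0; 1, 0, 1, 0, 1; 0, 1, 0, 0, 1; 0, 0, -1, 0, -1]
def gm32 : Matrix (Fin 5) (Fin 5) ℤ := !![0, 1, -1, 1, 0; 0, 1, 0, 0, 0; 0, 0, 1, 0, 0; 1, -1, 1, 0, 0; 0, 0, 0, 0, 1]
def gi32 : Matrix (Fin 5) (Fin 5) ℤ := !![0, 1, -1, 1, 0; 0, 1, 0, 0, 0; 0, 0, 1, 0, 0; 1, -1, 1, 0, 0; 0, 0, 0, 0, 1]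
def gm33 : Matrix (Fin 5) (Fin 5) ℤ := !![0, 1, -1, 1, 0; 0, 1, 0, 1, 1; 0, 0, 1, 0, 0; 1, -1, 1, 0, 0; 0, 0, 0, -1, 0]
def gi33 : Matrix (Fin 5) (Fin 5) ℤ := !![1, 0, 0, 1, 1; 1, 0, 1, 0, 1; 0, 0, 1, 0, 0; 0, 0, 0, 0, -1; -1, 1, -1, 0, 0]
def gm34 : Matrix (Fin 5) (Fin 5) ℤ := !![0, 1, 0, 0, 1; 0, 1, 0, 0, 0; 0, 0, 1, 0, 0; 1, -1, 1, 0, 0; 0, 0, -1, 1, 0]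
def gi34 : Matrix (Fin 5) (Fin 5) ℤ := !![0, 1, -1, 1, 0; 0, 1, 0, 0, 0; 0, 0, 1, 0, 0; 0, 0, 1, 0, 1; 1, -1, 0, 0, 0]
def gm35 : Matrix (Fin 5) (Fin 5) ℤ := !![0, 1, 0, 0, 1; 0, 1, 0, 1, 1; 0, 0, 1, 0, 0; 1, -1, 1, 0, 0; 0, 0, -1, 0, -1]
def gi35 : Matrix (Fin 5) (Fin 5) ℤ := !![1, 0, 0, 1, 1; 1, 0, 1, 0, 1; 0, 0, 1, 0, 0; -1, 1, 0, 0, 0; 0, 0, -1, 0, -1]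
def gm36 : Matrix (Fin 5) (Fin 5) ℤ := !![0, 0, 0, 0, -1; 0, 0, 1, 0, 0; 1, 0, 1, 0, 1; 0, 1, 0, 0, 1; 0, 0, -1, 1, 0]
def gi36 : Matrix (Fin 5) (Fin 5) ℤ := !![1, -1, 1, 0, 0; 1, 0, 0, 1, 0; 0, 1, 0, 0, 0; 0, 1, 0, 0, 1; -1, 0, 0, 0, 0]
def gm37 : Matrix (Fin 5) (Fin 5) ℤ := !![0, 0, 0, 1, 0; 0, 0, 1, 0, 0; 1, 0, 1, 0, 1; 0, 1, 0, 0, 1; 0, 0, -1, 0, -1]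
def gi37 : Matrix (Fin 5) (Fin 5) ℤ := !![0, 0, 1, 0, 1; 0, 1, 0, 1, 1; 0, 1, 0, 0, 0; 1, 0, 0, 0, 0; 0, -1, 0, 0, -1]
def gm38 : Matrix (Fin 5) (Fin 5) ℤ := !![0, 0, 1, -1, 0; 0, 0, 1, 0, 0; 1, 0, 0, 1, 0; 0, 1, -1, 1, 0; 0, 0, 0, 0, 1]
def gi38 : Matrix (Fin 5) (Fin 5) ℤ := !![1, -1, 1, 0, 0; 1, 0, 0, 1, 0; 0, 1, 0, 0, 0; -1, 1, 0, 0, 0; 0, 0, 0, 0, 1]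
def gm39 : Matrix (Fin 5) (Fin 5) ℤ := !![0, 0, 1, 0, 1; 0, 0, 1, 0, 0; 1, 0, 0, 1, 0; 0, 1, -1, 1, 0; 0, 0, 0, -1, 0]
def gi39 : Matrix (Fin 5) (Fin 5) ℤ := !![0, 0, 1, 0, 1; 0, 1, 0, 1, 1; 0, 1, 0, 0, 0; 0, 0, 0, 0, -1; 1, -1, 0, 0, 0]
def gm40 : Matrix (Fin 5) (Fin 5) ℤ := !![0, 0, 0, 0, -1; 0, 1, 0, 0, 0; 1, 0, 1, 0, 1; 0, 0, 1, 0, 1; 0, 0, -1, 1, 0]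
def gi40 : Matrix (Fin 5) (Fin 5) ℤ := !![0, 0, 1, -1, 0; 0, 1, 0, 0, 0; 1, 0, 0, 1, 0; 1, 0, 0, 1, 1; -1, 0, 0, 0, 0]
def gm41 : Matrix (Fin 5) (Fin 5) ℤ := !![0, 0, 0, 1, 0; 0, 1, 0, 1, 1; 1, 0, 1, 0, 1; 0, 0, 1, -1, 0; 0, 0, -1, 0, -1]
def gi41 : Matrix (Fin 5) (Fin 5) ℤ := !![0, 0, 1, 0, 1; 0, 1, 0, 1, 1; 1, 0, 0, 1, 0; 1, 0, 0, 0, 0; -1, 0, 0, -1, -1]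
def gm42 : Matrix (Fin 5) (Fin 5) ℤ := !![0, 0, 1, -1, 0; 0, 1, 0, 0, 0; 1, 0, 0, 1, 0; 0, 0, 0, 1, 0; 0, 0, 0, 0, 1]
def gi42 : Matrix (Fin 5) (Fin 5) ℤ := !![0, 0, 1, -1, 0; 0, 1, 0, 0, 0; 1, 0, 0, 1, 0; 0, 0, 0, 1, 0; 0, 0, 0, 0, 1]
def gm43 : Matrix (Fin 5) (Fin 5) ℤ := !![0, 0, 1, 0, 1; 0, 1, 0, 1, 1; 1, 0, 0, 1, 0; 0, 0, 0, 0, -1; 0, 0, 0, -1, 0]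
def gi43 : Matrix (Fin 5) (Fin 5) ℤ := !![0, 0, 1, 0, 1; 0, 1, 0, 1, 1; 1, 0, 0, 1, 0; 0, 0, 0, 0, -1; 0, 0, 0, -1, 0]
def gm44 : Matrix (Fin 5) (Fin 5) ℤ := !![0, 1, -1, 1, 0; 0, 1, 0, 0, 0; 1, 0, 1, 0, 1; 0, 0, 1, 0, 1; 0, -1, 0, 0, -1]
def gi44 : Matrix (Fin 5) (Fin 5) ℤ := !![0, 0, 1, -1, 0; 0, 1, 0, 0, 0; 0, 1, 0, 1, 1; 1, 0, 0, 1, 1; 0, -1, 0, 0, -1]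
def gm45 : Matrix (Fin 5) (Fin 5) ℤ := !![0, 1, -1, 1, 0; 0, 1, 0, 1, 1; 1, 0, 1, 0, 1; 0, 0, 1, -1, 0; 0, -1, 0, 0, -1]
def gi45 : Matrix (Fin 5) (Fin 5) ℤ := !![1, -1, 1, 0, 0; 1, 0, 0, 1, 0; 0, 1, 0, 1, 1; 0, 1, 0, 0, 1; -1, 0, 0, -1, -1]
def gm46 : Matrix (Fin 5) (Fin 5) ℤ := !![0, 1, 0, 0, 1; 0, 1, 0, 0, 0; 1, 0, 0, 1, 0; 0, 0, 0, 1, 0; 0, -1, 1, -1, 0]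
def gi46 : Matrix (Fin 5) (Fin 5) ℤ := !![0, 0, 1, -1, 0; 0, 1, 0, 0, 0; 0, 1, 0, 1, 1; 0, 0, 0, 1, 0; 1, -1, 0, 0, 0]
def gm47 : Matrix (Fin 5) (Fin 5) ℤ := !![0, 1, 0, 0, 1; 0, 1, 0, 1, 1; 1, 0, 0, 1, 0; 0, 0, 0, 0, -1; 0, -1, 1, -1, 0]
def gi47 : Matrix (Fin 5) (Fin 5) ℤ := !![1, -1, 1, 0, 0; 1, 0, 0, 1, 0; 0, 1, 0, 1, 1; -1, 1, 0, 0, 0; 0, 0, 0, -1, 0]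
def gm48 : Matrix (Fin 5) (Fin 5) ℤ := !![0, 0, 0, 0, -1; 0, 0, 1, 0, 0; 1, 0, 1, 0, 1; 1, 0, 0, 1, 1; -1, 1, -1, 0, 0]
def gi48 : Matrix (Fin 5) (Fin 5) ℤ := !![1, -1, 1, 0, 0; 1, 0, 1, 0, 1; 0, 1, 0, 0, 0; 0, 1, -1, 1, 0; -1, 0, 0, 0, 0]
def gm49 : Matrix (Fin 5) (Fin 5) ℤ := !![0, 0, 0, 1, 0; 0, 0, 1, 0, 0; 1, 0, 1, 0, 1; 1, 0, 0, 0, 0; -1, 1, -1, 0, 0]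
def gi49 : Matrix (Fin 5) (Fin 5) ℤ := !![0, 0, 0, 1, 0; 0, 1, 0, 1, 1; 0, 1, 0, 0, 0; 1, 0, 0, 0, 0; 0, -1, 1, -1, 0]
def gm50 : Matrix (Fin 5) (Fin 5) ℤ := !![0, 0, 1, -1, 0; 0, 0, 1, 0, 0; 1, 0, 0, 1, 0; 1, 0, 0, 1, 1; -1, 1, -1, 0, 0]
def gi50 : Matrix (Fin 5) (Fin 5) ℤ := !![1, -1, 1, 0, 0; 1, 0, 1, 0, 1; 0, 1, 0, 0, 0; -1, 1, 0, 0, 0; 0, 0, -1, 1, 0]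
def gm51 : Matrix (Fin 5) (Fin 5) ℤ := !![0, 0, 1, 0, 1; 0, 0, 1, 0, 0; 1, 0, 0, 1, 0; 1, 0, 0, 0, 0; -1, 1, -1, 0, 0]
def gi51 : Matrix (Fin 5) (Fin 5) ℤ := !![0, 0, 0, 1, 0; 0, 1, 0, 1, 1; 0, 1, 0, 0, 0; 0, 0, 1, -1, 0; 1, -1, 0, 0, 0]
def gm52 : Matrix (Fin 5) (Fin 5) ℤ := !![0, 0, 0, 0, -1; 0, 1, 0, 0, 0; 1, 0, 1, 0, 1; 1, 0, 0, 1, 1; -1, 0, 0, 0, 0]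
def gi52 : Matrix (Fin 5) (Fin 5) ℤ := !![0, 0, 0, 0, -1; 0, 1, 0, 0, 0; 1, 0, 1, 0, 1; 1, 0, 0, 1, 1; -1, 0, 0, 0, 0]
def gm53 : Matrix (Fin 5) (Fin 5) ℤ := !![0, 0, 0, 1, 0; 0, 1, 0, 1, 1; 1, 0, 1, 0, 1; 1, 0, 0, 0, 0; -1, 0, 0, -1, -1]
def gi53 : Matrix (Fin 5) (Fin 5) ℤ := !![0, 0, 0, 1, 0; 0, 1, 0, 1, 1; 1, 0, 1, 0, 1; 1, 0, 0, 0, 0; -1, 0, 0, -1, -1]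
def gm54 : Matrix (Fin 5) (Fin 5) ℤ := !![0, 0, 1, -1, 0; 0, 1, 0, 0, 0; 1, 0, 0, 1, 0; 1, 0, 0, 1, 1; -1, 0, 0, 0, 0]
def gi54 : Matrix (Fin 5) (Fin 5) ℤ := !![0, 0, 0, 0, -1; 0, 1, 0, 0, 0; 1, 0, 1, 0, 1; 0, 0, 1, 0, 1; 0, 0, -1, 1, 0]
def gm55 : Matrix (Fin 5) (Fin 5) ℤ := !![0, 0, 1, 0, 1; 0, 1, 0, 1, 1; 1, 0, 0, 1, 0; 1, 0, 0, 0, 0; -1, 0, 0, -1, -1]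
def gi55 : Matrix (Fin 5) (Fin 5) ℤ := !![0, 0, 0, 1, 0; 0, 1, 0, 1, 1; 1, 0, 1, 0, 1; 0, 0, 1, -1, 0; 0, 0, -1, 0, -1]
def gm56 : Matrix (Fin 5) (Fin 5) ℤ := !![0, 1, -1, 1, 0; 0, 1, 0, 0, 0; 1, 0, 1, 0, 1; 1, -1, 1, 0, 0; -1, 0, 0, 0, 0]
def gi56 : Matrix (Fin 5) (Fin 5) ℤ := !![0, 0, 0, 0, -1; 0, 1, 0, 0, 0; 0, 1, 0, 1, 1; 1, 0, 0, 1, 1; 0, -1, 1, -1, 0]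
def gm57 : Matrix (Fin 5) (Fin 5) ℤ := !![0, 1, -1, 1, 0; 0, 1, 0, 1, 1; 1, 0, 1, 0, 1; 1, -1, 1, 0, 0; -1, 0, 0, -1, -1]
def gi57 : Matrix (Fin 5) (Fin 5) ℤ := !![1, -1, 1, 0, 0; 1, 0, 1, 0, 1; 0, 1, 0, 1, 1; 0, 1, -1, 1, 0; -1, 0, 0, -1, -1]
def gm58 : Matrix (Fin 5) (Fin 5) ℤ := !![0, 1, 0, 0, 1; 0, 1, 0, 0, 0; 1, 0, 0, 1, 0; 1, -1, 1, 0, 0; -1, 0, 0, 0, 0]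
def gi58 : Matrix (Fin 5) (Fin 5) ℤ := !![0, 0, 0, 0, -1; 0, 1, 0, 0, 0; 0, 1, 0, 1, 1; 0, 0, 1, 0, 1; 1, -1, 0, 0, 0]
def gm59 : Matrix (Fin 5) (Fin 5) ℤ := !![0, 1, 0, 0, 1; 0, 1, 0, 1, 1; 1, 0, 0, 1, 0; 1, -1, 1, 0, 0; -1, 0, 0, -1, -1]
def gi59 : Matrix (Fin 5) (Fin 5) ℤ := !![1, -1, 1, 0, 0; 1, 0, 1, 0, 1; 0, 1, 0, 1, 1; -1, 1, 0, 0, 0; 0, 0, -1, 0, -1]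
def gm60 : Matrix (Fin 5) (Fin 5) ℤ := !![0, 0, 0, 0, -1; 1, 0, 0, 1, 0; 0, 1, 0, 1, 1; 0, 0, 1, 0, 1; 0, 0, 0, -1, 0]
def gi60 : Matrix (Fin 5) (Fin 5) ℤ := !![0, 1, 0, 0, 1; 1, 0, 1, 0, 1; 1, 0, 0, 1, 0; 0, 0, 0, 0, -1; -1, 0, 0, 0, 0]
def gm61 : Matrix (Fin 5) (Fin 5) ℤ := !![0, 0, 0, 1, 0; 1, 0, 0, 1, 0; 0, 1, 0, 0, 0; 0, 0, 1, -1, 0; 0, 0, 0, 0, 1]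
def gi61 : Matrix (Fin 5) (Fin 5) ℤ := !![-1, 1, 0, 0, 0; 0, 0, 1, 0, 0; 1, 0, 0, 1, 0; 1, 0, 0, 0, 0; 0, 0, 0, 0, 1]
def gm62 : Matrix (Fin 5) (Fin 5) ℤ := !![0, 0, 1, -1, 0; 1, 0, 1, 0, 1; 0, 1, 0, 1, 1; 0, 0, 0, 1, 0; 0, 0, -1, 0, -1]
def gi62 : Matrix (Fin 5) (Fin 5) ℤ := !![0, 1, 0, 0, 1; 1, 0, 1, 0, 1; 1, 0, 0, 1, 0; 0, 0, 0, 1, 0; -1, 0, 0, -1, -1]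
def gm63 : Matrix (Fin 5) (Fin 5) ℤ := !![0, 0, 1, 0, 1; 1, 0, 1, 0, 1; 0, 1, 0, 0, 0; 0, 0, 0, 0, -1; 0, 0, -1, 1, 0]
def gi63 : Matrix (Fin 5) (Fin 5) ℤ := !![-1, 1, 0, 0, 0; 0, 0, 1, 0, 0; 1, 0, 0, 1, 0; 1, 0, 0, 1, 1; 0, 0, 0, -1, 0]
def gm64 : Matrix (Fin 5) (Fin 5) ℤ := !![0, 0, 0, 0, -1; 1, 0, 0, 1, 0; 0, 1, 0, 1, 1; 0, 1, 0, 0, 1; 0, -1, 1, -1, 0]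
def gi64 : Matrix (Fin 5) (Fin 5) ℤ := !![0, 1, -1, 1, 0; 1, 0, 0, 1, 0; 1, 0, 1, 0, 1; 0, 0, 1, -1, 0; -1, 0, 0, 0, 0]
def gm65 : Matrix (Fin 5) (Fin 5) ℤ := !![0, 0, 0, 1, 0; 1, 0, 0, 1, 0; 0, 1, 0, 0, 0; 0, 1, 0, 0, 1; 0, -1, 1, -1, 0]
def gi65 : Matrix (Fin 5) (Fin 5) ℤ := !![-1, 1, 0, 0, 0; 0, 0, 1, 0, 0; 1, 0, 1, 0, 1; 1, 0, 0, 0, 0; 0, 0, -1, 1, 0]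
def gm66 : Matrix (Fin 5) (Fin 5) ℤ := !![0, 0, 1, -1, 0; 1, 0, 1, 0, 1; 0, 1, 0, 1, 1; 0, 1, -1, 1, 0; 0, -1, 0, 0, -1]
def gi66 : Matrix (Fin 5) (Fin 5) ℤ := !![0, 1, -1, 1, 0; 1, 0, 0, 1, 0; 1, 0, 1, 0, 1; 0, 0, 1, 0, 1; -1, 0, 0, -1, -1]
def gm67 : Matrix (Fin 5) (Fin 5) ℤ := !![0, 0, 1, 0, 1; 1, 0, 1, 0, 1; 0, 1, 0, 0, 0; 0, 1, -1, 1, 0; 0, -1, 0, 0, -1]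
def gi67 : Matrix (Fin 5) (Fin 5) ℤ := !![-1, 1, 0, 0, 0; 0, 0, 1, 0, 0; 1, 0, 1, 0, 1; 1, 0, 0, 1, 1; 0, 0, -1, 0, -1]
def gm68 : Matrix (Fin 5) (Fin 5) ℤ := !![0, 1, -1, 1, 0; 1, 0, 0, 1, 0; 0, 0, 1, 0, 0; 0, 0, 1, -1, 0; 0, 0, 0, 0, 1]
def gi68 : Matrix (Fin 5) (Fin 5) ℤ := !![0, 1, -1, 1, 0; 1, 0, 0, 1, 0; 0, 0, 1, 0, 0; 0, 0, 1, -1, 0; 0, 0, 0, 0, 1]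
def gm69 : Matrix (Fin 5) (Fin 5) ℤ := !![0, 1, -1, 1, 0; 1, 0, 0, 1, 0; 0, 0, 1, 0, 0; 0, 0, 1, 0, 1; 0, 0, 0, -1, 0]
def gi69 : Matrix (Fin 5) (Fin 5) ℤ := !![0, 1, 0, 0, 1; 1, 0, 1, 0, 1; 0, 0, 1, 0, 0; 0, 0, 0, 0, -1; 0, 0, -1, 1, 0]
def gm70 : Matrix (Fin 5) (Fin 5) ℤ := !![0, 1, 0, 0, 1; 1, 0, 1, 0, 1; 0, 0, 1, 0, 0; 0, 0, 0, 0, -1; 0, 0, -1, 1, 0]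
def gi70 : Matrix (Fin 5) (Fin 5) ℤ := !![0, 1, -1, 1, 0; 1, 0, 0, 1, 0; 0, 0, 1, 0, 0; 0, 0, 1, 0, 1; 0, 0, 0, -1, 0]
def gm71 : Matrix (Fin 5) (Fin 5) ℤ := !![0, 1, 0, 0, 1; 1, 0, 1, 0, 1; 0, 0, 1, 0, 0; 0, 0, 0, 1, 0; 0, 0, -1, 0, -1]
def gi71 : Matrix (Fin 5) (Fin 5) ℤ := !![0, 1, 0, 0, 1; 1, 0, 1, 0, 1; 0, 0, 1, 0, 0; 0, 0, 0, 1, 0; 0, 0, -1, 0, -1]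
def gm72 : Matrix (Fin 5) (Fin 5) ℤ := !![0, 0, 0, 0, -1; 1, 0, 0, 1, 0; 1, 0, 1, 0, 1; 0, 0, 1, 0, 1; -1, 1, -1, 0, 0]
def gi72 : Matrix (Fin 5) (Fin 5) ℤ := !![0, 0, 1, -1, 0; 1, 0, 1, 0, 1; 1, 0, 0, 1, 0; 0, 1, -1, 1, 0; -1, 0, 0, 0, 0]
def gm73 : Matrix (Fin 5) (Fin 5) ℤ := !![0, 0, 0, 1, 0; 1, 0, 0, 1, 0; 1, 0, 1, 0, 1; 0, 0, 1, -1, 0; -1, 1, -1, 0, 0]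
def gi73 : Matrix (Fin 5) (Fin 5) ℤ := !![-1, 1, 0, 0, 0; 0, 1, 0, 1, 1; 1, 0, 0, 1, 0; 1, 0, 0, 0, 0; 0, -1, 1, -1, 0]
def gm74 : Matrix (Fin 5) (Fin 5) ℤ := !![0, 0, 1, -1, 0; 1, 0, 1, 0, 1; 1, 0, 0, 1, 0; 0, 0, 0, 1, 0; -1, 1, -1, 0, 0]
def gi74 : Matrix (Fin 5) (Fin 5) ℤ := !![0, 0, 1, -1, 0; 1, 0, 1, 0, 1; 1, 0, 0, 1, 0; 0, 0, 0, 1, 0; -1, 1, -1, 0, 0]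
def gm75 : Matrix (Fin 5) (Fin 5) ℤ := !![0, 0, 1, 0, 1; 1, 0, 1, 0, 1; 1, 0, 0, 1, 0; 0, 0, 0, 0, -1; -1, 1, -1, 0, 0]
def gi75 : Matrix (Fin 5) (Fin 5) ℤ := !![-1, 1, 0, 0, 0; 0, 1, 0, 1, 1; 1, 0, 0, 1, 0; 1, -1, 1, 0, 0; 0, 0, 0, -1, 0]
def gm76 : Matrix (Fin 5) (Fin 5) ℤ := !![0, 0, 0, 0, -1; 1, 0, 0, 1, 0; 1, 0, 1, 0, 1; 0, 1, 0, 0, 1; -1, 0, 0, 0, 0]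
def gi76 : Matrix (Fin 5) (Fin 5) ℤ := !![0, 0, 0, 0, -1; 1, 0, 0, 1, 0; 1, 0, 1, 0, 1; 0, 1, 0, 0, 1; -1, 0, 0, 0, 0]
def gm77 : Matrix (Fin 5) (Fin 5) ℤ := !![0, 0, 0, 1, 0; 1, 0, 0, 1, 0; 1, 0, 1, 0, 1; 0, 1, 0, 0, 1; -1, 0, 0, -1, -1]
def gi77 : Matrix (Fin 5) (Fin 5) ℤ := !![-1, 1, 0, 0, 0; 0, 1, 0, 1, 1; 1, 0, 1, 0, 1; 1, 0, 0, 0, 0; 0, -1, 0, 0, -1]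
def gm78 : Matrix (Fin 5) (Fin 5) ℤ := !![0, 0, 1, -1, 0; 1, 0, 1, 0, 1; 1, 0, 0, 1, 0; 0, 1, -1, 1, 0; -1, 0, 0, 0, 0]
def gi78 : Matrix (Fin 5) (Fin 5) ℤ := !![0, 0, 0, 0, -1; 1, 0, 0, 1, 0; 1, 0, 1, 0, 1; 0, 0, 1, 0, 1; -1, 1, -1, 0, 0]
def gm79 : Matrix (Fin 5) (Fin 5) ℤ := !![0, 0, 1, 0, 1; 1, 0, 1, 0, 1; 1, 0, 0, 1, 0; 0, 1, -1, 1, 0; -1, 0, 0, -1, -1]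
def gi79 : Matrix (Fin 5) (Fin 5) ℤ := !![-1, 1, 0, 0, 0; 0, 1, 0, 1, 1; 1, 0, 1, 0, 1; 1, -1, 1, 0, 0; 0, 0, -1, 0, -1]
def gm80 : Matrix (Fin 5) (Fin 5) ℤ := !![0, 1, -1, 1, 0; 1, 0, 0, 1, 0; 1, 0, 1, 0, 1; 0, 0, 1, -1, 0; -1, 0, 0, 0, 0]
def gi80 : Matrix (Fin 5) (Fin 5) ℤ := !![0, 0, 0, 0, -1; 1, 0, 0, 1, 0; 0, 1, 0, 1, 1; 0, 1, 0, 0, 1; 0, -1, 1, -1, 0]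
def gm81 : Matrix (Fin 5) (Fin 5) ℤ := !![0, 1, -1, 1, 0; 1, 0, 0, 1, 0; 1, 0, 1, 0, 1; 0, 0, 1, 0, 1; -1, 0, 0, -1, -1]
def gi81 : Matrix (Fin 5) (Fin 5) ℤ := !![0, 0, 1, -1, 0; 1, 0, 1, 0, 1; 0, 1, 0, 1, 1; 0, 1, -1, 1, 0; 0, -1, 0, 0, -1]
def gm82 : Matrix (Fin 5) (Fin 5) ℤ := !![0, 1, 0, 0, 1; 1, 0, 1, 0, 1; 1, 0, 0, 1, 0; 0, 0, 0, 0, -1; -1, 0, 0, 0, 0]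
def gi82 : Matrix (Fin 5) (Fin 5) ℤ := !![0, 0, 0, 0, -1; 1, 0, 0, 1, 0; 0, 1, 0, 1, 1; 0, 0, 1, 0, 1; 0, 0, 0, -1, 0]
def gm83 : Matrix (Fin 5) (Fin 5) ℤ := !![0, 1, 0, 0, 1; 1, 0, 1, 0, 1; 1, 0, 0, 1, 0; 0, 0, 0, 1, 0; -1, 0, 0, -1, -1]
def gi83 : Matrix (Fin 5) (Fin 5) ℤ := !![0, 0, 1, -1, 0; 1, 0, 1, 0, 1; 0, 1, 0, 1, 1; 0, 0, 0, 1, 0; 0, 0, -1, 0, -1]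
def gm84 : Matrix (Fin 5) (Fin 5) ℤ := !![1, -1, 1, 0, 0; 0, 0, 1, 0, 0; 0, 1, 0, 0, 0; 0, 1, -1, 1, 0; 0, 0, 0, 0, 1]
def gi84 : Matrix (Fin 5) (Fin 5) ℤ := !![1, -1, 1, 0, 0; 0, 0, 1, 0, 0; 0, 1, 0, 0, 0; 0, 1, -1, 1, 0; 0, 0, 0, 0, 1]
def gm85 : Matrix (Fin 5) (Fin 5) ℤ := !![1, -1, 1, 0, 0; 0, 0, 1, 0, 0; 0, 1, 0, 1, 1; 0, 1, -1, 1, 0; 0, 0, 0, -1, 0]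
def gi85 : Matrix (Fin 5) (Fin 5) ℤ := !![1, 0, 0, 1, 1; 0, 1, 0, 1, 1; 0, 1, 0, 0, 0; 0, 0, 0, 0, -1; 0, -1, 1, -1, 0]
def gm86 : Matrix (Fin 5) (Fin 5) ℤ := !![1, -1, 1, 0, 0; 0, 0, 1, 0, 0; 0, 1, 0, 0, 0; 0, 1, 0, 0, 1; 0, 0, -1, 1, 0]
def gi86 : Matrix (Fin 5) (Fin 5) ℤ := !![1, -1, 1, 0, 0; 0, 0, 1, 0, 0; 0, 1, 0, 0, 0; 0, 1, 0, 0, 1; 0, 0, -1, 1, 0]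
def gm87 : Matrix (Fin 5) (Fin 5) ℤ := !![1, -1, 1, 0, 0; 0, 0, 1, 0, 0; 0, 1, 0, 1, 1; 0, 1, 0, 0, 1; 0, 0, -1, 0, -1]
def gi87 : Matrix (Fin 5) (Fin 5) ℤ := !![1, 0, 0, 1, 1; 0, 1, 0, 1, 1; 0, 1, 0, 0, 0; 0, 0, 1, -1, 0; 0, -1, 0, 0, -1]
def gm88 : Matrix (Fin 5) (Fin 5) ℤ := !![1, 0, 0, 0, 0; 0, 1, 0, 0, 0; 0, 0, 1, 0, 0; 0, 0, 0, 1, 0; 0, 0, 0, 0, 1]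
def gi88 : Matrix (Fin 5) (Fin 5) ℤ := !![1, 0, 0, 0, 0; 0, 1, 0, 0, 0; 0, 0, 1, 0, 0; 0, 0, 0, 1, 0; 0, 0, 0, 0, 1]
def gm89 : Matrix (Fin 5) (Fin 5) ℤ := !![1, 0, 0, 1, 1; 0, 1, 0, 1, 1; 0, 0, 1, 0, 0; 0, 0, 0, 0, -1; 0, 0, 0, -1, 0]
def gi89 : Matrix (Fin 5) (Fin 5) ℤ := !![1, 0, 0, 1, 1; 0, 1, 0, 1, 1; 0, 0, 1, 0, 0; 0, 0, 0, 0, -1; 0, 0, 0, -1, 0]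
def gm90 : Matrix (Fin 5) (Fin 5) ℤ := !![1, 0, 0, 0, 0; 0, 1, 0, 0, 0; 0, 0, 1, 0, 0; 0, 0, 1, 0, 1; 0, 0, -1, 1, 0]
def gi90 : Matrix (Fin 5) (Fin 5) ℤ := !![1, 0, 0, 0, 0; 0, 1, 0, 0, 0; 0, 0, 1, 0, 0; 0, 0, 1, 0, 1; 0, 0, -1, 1, 0]
def gm91 : Matrix (Fin 5) (Fin 5) ℤ := !![1, 0, 0, 1, 1; 0, 1, 0, 1, 1; 0, 0, 1, 0, 0; 0, 0, 1, -1, 0; 0, 0, -1, 0, -1]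
def gi91 : Matrix (Fin 5) (Fin 5) ℤ := !![1, 0, 0, 1, 1; 0, 1, 0, 1, 1; 0, 0, 1, 0, 0; 0, 0, 1, -1, 0; 0, 0, -1, 0, -1]
def gm92 : Matrix (Fin 5) (Fin 5) ℤ := !![1, 0, 0, 0, 0; 0, 1, 0, 0, 0; 0, 1, 0, 1, 1; 0, 0, 0, 1, 0; 0, -1, 1, -1, 0]
def gi92 : Matrix (Fin 5) (Fin 5) ℤ := !![1, 0, 0, 0, 0; 0, 1, 0, 0, 0; 0, 1, 0, 1, 1; 0, 0, 0, 1, 0; 0, -1, 1, -1, 0]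
def gm93 : Matrix (Fin 5) (Fin 5) ℤ := !![1, 0, 0, 1, 1; 0, 1, 0, 1, 1; 0, 1, 0, 0, 0; 0, 0, 0, 0, -1; 0, -1, 1, -1, 0]
def gi93 : Matrix (Fin 5) (Fin 5) ℤ := !![1, -1, 1, 0, 0; 0, 0, 1, 0, 0; 0, 1, 0, 1, 1; 0, 1, -1, 1, 0; 0, 0, 0, -1, 0]
def gm94 : Matrix (Fin 5) (Fin 5) ℤ := !![1, 0, 0, 0, 0; 0, 1, 0, 0, 0; 0, 1, 0, 1, 1; 0, 0, 1, 0, 1; 0, -1, 0, 0, -1]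
def gi94 : Matrix (Fin 5) (Fin 5) ℤ := !![1, 0, 0, 0, 0; 0, 1, 0, 0, 0; 0, 1, 0, 1, 1; 0, 0, 1, 0, 1; 0, -1, 0, 0, -1]
def gm95 : Matrix (Fin 5) (Fin 5) ℤ := !![1, 0, 0, 1, 1; 0, 1, 0, 1, 1; 0, 1, 0, 0, 0; 0, 0, 1, -1, 0; 0, -1, 0, 0, -1]
def gi95 : Matrix (Fin 5) (Fin 5) ℤ := !![1, -1, 1, 0, 0; 0, 0, 1, 0, 0; 0, 1, 0, 1, 1; 0, 1, 0, 0, 1; 0, 0, -1, 0, -1]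
def gm96 : Matrix (Fin 5) (Fin 5) ℤ := !![1, -1, 1, 0, 0; 1, 0, 0, 1, 0; 0, 1, 0, 0, 0; -1, 1, 0, 0, 0; 0, 0, 0, 0, 1]
def gi96 : Matrix (Fin 5) (Fin 5) ℤ := !![0, 0, 1, -1, 0; 0, 0, 1, 0, 0; 1, 0, 0, 1, 0; 0, 1, -1, 1, 0; 0, 0, 0, 0, 1]
def gm97 : Matrix (Fin 5) (Fin 5) ℤ := !![1, -1, 1, 0, 0; 1, 0, 0, 1, 0; 0, 1, 0, 1, 1; -1, 1, 0, 0, 0; 0, 0, 0, -1, 0]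
def gi97 : Matrix (Fin 5) (Fin 5) ℤ := !![0, 1, 0, 0, 1; 0, 1, 0, 1, 1; 1, 0, 0, 1, 0; 0, 0, 0, 0, -1; 0, -1, 1, -1, 0]
def gm98 : Matrix (Fin 5) (Fin 5) ℤ := !![1, -1, 1, 0, 0; 1, 0, 1, 0, 1; 0, 1, 0, 0, 0; -1, 1, 0, 0, 0; 0, 0, -1, 1, 0]
def gi98 : Matrix (Fin 5) (Fin 5) ℤ := !![0, 0, 1, -1, 0; 0, 0, 1, 0, 0; 1, 0, 0, 1, 0; 1, 0, 0, 1, 1; -1, 1, -1, 0, 0]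
def gm99 : Matrix (Fin 5) (Fin 5) ℤ := !![1, -1, 1, 0, 0; 1, 0, 1, 0, 1; 0, 1, 0, 1, 1; -1, 1, 0, 0, 0; 0, 0, -1, 0, -1]
def gi99 : Matrix (Fin 5) (Fin 5) ℤ := !![0, 1, 0, 0, 1; 0, 1, 0, 1, 1; 1, 0, 0, 1, 0; 1, -1, 1, 0, 0; -1, 0, 0, -1, -1]
def gm100 : Matrix (Fin 5) (Fin 5) ℤ := !![1, 0, 0, 0, 0; 1, 0, 0, 1, 0; 0, 0, 1, 0, 0; -1, 1, 0, 0, 0; 0, 0, 0, 0, 1]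
def gi100 : Matrix (Fin 5) (Fin 5) ℤ := !![1, 0, 0, 0, 0; 1, 0, 0, 1, 0; 0, 0, 1, 0, 0; -1, 1, 0, 0, 0; 0, 0, 0, 0, 1]
def gm101 : Matrix (Fin 5) (Fin 5) ℤ := !![1, 0, 0, 1, 1; 1, 0, 0, 1, 0; 0, 0, 1, 0, 0; -1, 1, 0, 0, 0; 0, 0, 0, -1, 0]
def gi101 : Matrix (Fin 5) (Fin 5) ℤ := !![0, 1, 0, 0, 1; 0, 1, 0, 1, 1; 0, 0, 1, 0, 0; 0, 0, 0, 0, -1; 1, -1, 0, 0, 0]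
def gm102 : Matrix (Fin 5) (Fin 5) ℤ := !![1, 0, 0, 0, 0; 1, 0, 1, 0, 1; 0, 0, 1, 0, 0; -1, 1, 0, 0, 0; 0, 0, -1, 1, 0]
def gi102 : Matrix (Fin 5) (Fin 5) ℤ := !![1, 0, 0, 0, 0; 1, 0, 0, 1, 0; 0, 0, 1, 0, 0; 0, 0, 1, 0, 1; -1, 1, -1, 0, 0]
def gm103 : Matrix (Fin 5) (Fin 5) ℤ := !![1, 0, 0, 1, 1; 1, 0, 1, 0, 1; 0, 0, 1, 0, 0; -1, 1, 0, 0, 0; 0, 0, -1, 0, -1]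
def gi103 : Matrix (Fin 5) (Fin 5) ℤ := !![0, 1, 0, 0, 1; 0, 1, 0, 1, 1; 0, 0, 1, 0, 0; 1, -1, 1, 0, 0; 0, 0, -1, 0, -1]
def gm104 : Matrix (Fin 5) (Fin 5) ℤ := !![1, 0, 0, 0, 0; 1, 0, 0, 1, 0; 0, 1, 0, 1, 1; -1, 1, 0, 0, 0; 0, -1, 1, -1, 0]
def gi104 : Matrix (Fin 5) (Fin 5) ℤ := !![1, 0, 0, 0, 0; 1, 0, 0, 1, 0; 0, 1, 0, 1, 1; -1, 1, 0, 0, 0; 0, -1, 1, -1, 0]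
def gm105 : Matrix (Fin 5) (Fin 5) ℤ := !![1, 0, 0, 1, 1; 1, 0, 0, 1, 0; 0, 1, 0, 0, 0; -1, 1, 0, 0, 0; 0, -1, 1, -1, 0]
def gi105 : Matrix (Fin 5) (Fin 5) ℤ := !![0, 0, 1, -1, 0; 0, 0, 1, 0, 0; 0, 1, 0, 1, 1; 0, 1, -1, 1, 0; 1, -1, 0, 0, 0]
def gm106 : Matrix (Fin 5) (Fin 5) ℤ := !![1, 0, 0, 0, 0; 1, 0, 1, 0, 1; 0, 1, 0, 1, 1; -1, 1, 0, 0, 0; 0, -1, 0, 0, -1]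
def gi106 : Matrix (Fin 5) (Fin 5) ℤ := !![1, 0, 0, 0, 0; 1, 0, 0, 1, 0; 0, 1, 0, 1, 1; 0, 0, 1, 0, 1; -1, 0, 0, -1, -1]
def gm107 : Matrix (Fin 5) (Fin 5) ℤ := !![1, 0, 0, 1, 1; 1, 0, 1, 0, 1; 0, 1, 0, 0, 0; -1, 1, 0, 0, 0; 0, -1, 0, 0, -1]
def gi107 : Matrix (Fin 5) (Fin 5) ℤ := !![0, 0, 1, -1, 0; 0, 0, 1, 0, 0; 0, 1, 0, 1, 1; 1, 0, 0, 1, 1; 0, 0, -1, 0, -1]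
def gm108 : Matrix (Fin 5) (Fin 5) ℤ := !![1, -1, 1, 0, 0; 1, 0, 0, 1, 0; 0, 1, 0, 0, 0; 0, 1, 0, 0, 1; -1, 0, 0, 0, 0]
def gi108 : Matrix (Fin 5) (Fin 5) ℤ := !![0, 0, 0, 0, -1; 0, 0, 1, 0, 0; 1, 0, 1, 0, 1; 0, 1, 0, 0, 1; 0, 0, -1, 1, 0]
def gm109 : Matrix (Fin 5) (Fin 5) ℤ := !![1, -1, 1, 0, 0; 1, 0, 0, 1, 0; 0, 1, 0, 1, 1; 0, 1, 0, 0, 1; -1, 0, 0, -1, -1]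
def gi109 : Matrix (Fin 5) (Fin 5) ℤ := !![0, 1, -1, 1, 0; 0, 1, 0, 1, 1; 1, 0, 1, 0, 1; 0, 0, 1, -1, 0; 0, -1, 0, 0, -1]
def gm110 : Matrix (Fin 5) (Fin 5) ℤ := !![1, -1, 1, 0, 0; 1, 0, 1, 0, 1; 0, 1, 0, 0, 0; 0, 1, -1, 1, 0; -1, 0, 0, 0, 0]
def gi110 : Matrix (Fin 5) (Fin 5) ℤ := !![0, 0, 0, 0, -1; 0, 0, 1, 0, 0; 1, 0, 1, 0, 1; 1, 0, 0, 1, 1; -1, 1, -1, 0, 0]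
def gm111 : Matrix (Fin 5) (Fin 5) ℤ := !![1, -1, 1, 0, 0; 1, 0, 1, 0, 1; 0, 1, 0, 1, 1; 0, 1, -1, 1, 0; -1, 0, 0, -1, -1]
def gi111 : Matrix (Fin 5) (Fin 5) ℤ := !![0, 1, -1, 1, 0; 0, 1, 0, 1, 1; 1, 0, 1, 0, 1; 1, -1, 1, 0, 0; -1, 0, 0, -1, -1]
def gm112 : Matrix (Fin 5) (Fin 5) ℤ := !![1, 0, 0, 0, 0; 1, 0, 0, 1, 0; 0, 0, 1, 0, 0; 0, 0, 1, 0, 1; -1, 1, -1, 0, 0]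
def gi112 : Matrix (Fin 5) (Fin 5) ℤ := !![1, 0, 0, 0, 0; 1, 0, 1, 0, 1; 0, 0, 1, 0, 0; -1, 1, 0, 0, 0; 0, 0, -1, 1, 0]
def gm113 : Matrix (Fin 5) (Fin 5) ℤ := !![1, 0, 0, 1, 1; 1, 0, 0, 1, 0; 0, 0, 1, 0, 0; 0, 0, 1, -1, 0; -1, 1, -1, 0, 0]
def gi113 : Matrix (Fin 5) (Fin 5) ℤ := !![0, 1, -1, 1, 0; 0, 1, 0, 1, 1; 0, 0, 1, 0, 0; 0, 0, 1, -1, 0; 1, -1, 0, 0, 0]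
def gm114 : Matrix (Fin 5) (Fin 5) ℤ := !![1, 0, 0, 0, 0; 1, 0, 1, 0, 1; 0, 0, 1, 0, 0; 0, 0, 0, 1, 0; -1, 1, -1, 0, 0]
def gi114 : Matrix (Fin 5) (Fin 5) ℤ := !![1, 0, 0, 0, 0; 1, 0, 1, 0, 1; 0, 0, 1, 0, 0; 0, 0, 0, 1, 0; -1, 1, -1, 0, 0]
def gm115 : Matrix (Fin 5) (Fin 5) ℤ := !![1, 0, 0, 1, 1; 1, 0, 1, 0, 1; 0, 0, 1, 0, 0; 0, 0, 0, 0, -1; -1, 1, -1, 0, 0]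
def gi115 : Matrix (Fin 5) (Fin 5) ℤ := !![0, 1, -1, 1, 0; 0, 1, 0, 1, 1; 0, 0, 1, 0, 0; 1, -1, 1, 0, 0; 0, 0, 0, -1, 0]
def gm116 : Matrix (Fin 5) (Fin 5) ℤ := !![1, 0, 0, 0, 0; 1, 0, 0, 1, 0; 0, 1, 0, 1, 1; 0, 0, 1, 0, 1; -1, 0, 0, -1, -1]
def gi116 : Matrix (Fin 5) (Fin 5) ℤ := !![1, 0, 0, 0, 0; 1, 0, 1, 0, 1; 0, 1, 0, 1, 1; -1, 1, 0, 0, 0; 0, -1, 0, 0, -1]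
def gm117 : Matrix (Fin 5) (Fin 5) ℤ := !![1, 0, 0, 1, 1; 1, 0, 0, 1, 0; 0, 1, 0, 0, 0; 0, 0, 1, -1, 0; -1, 0, 0, 0, 0]
def gi117 : Matrix (Fin 5) (Fin 5) ℤ := !![0, 0, 0, 0, -1; 0, 0, 1, 0, 0; 0, 1, 0, 1, 1; 0, 1, 0, 0, 1; 1, -1, 0, 0, 0]
def gm118 : Matrix (Fin 5) (Fin 5) ℤ := !![1, 0, 0, 0, 0; 1, 0, 1, 0, 1; 0, 1, 0, 1, 1; 0, 0, 0, 1, 0; -1, 0, 0, -1, -1]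
def gi118 : Matrix (Fin 5) (Fin 5) ℤ := !![1, 0, 0, 0, 0; 1, 0, 1, 0, 1; 0, 1, 0, 1, 1; 0, 0, 0, 1, 0; -1, 0, 0, -1, -1]
def gm119 : Matrix (Fin 5) (Fin 5) ℤ := !![1, 0, 0, 1, 1; 1, 0, 1, 0, 1; 0, 1, 0, 0, 0; 0, 0, 0, 0, -1; -1, 0, 0, 0, 0]
def gi119 : Matrix (Fin 5) (Fin 5) ℤ := !![0, 0, 0, 0, -1; 0, 0, 1, 0, 0; 0, 1, 0, 1, 1; 1, 0, 0, 1, 1; 0, 0, 0, -1, 0]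
def matPairs : List (Matrix (Fin 5) (Fin 5) ℤ × Matrix (Fin 5) (Fin 5) ℤ) := [
  (gm0, gi0),
  (gm1, gi1),
  (gm2, gi2),
  (gm3, gi3),
  (gm4, gi4),
  (gm5, gi5),
  (gm6, gi6),
  (gm7, gi7),
  (gm8, gi8),
  (gm9, gi9),
  (gm10, gi10),
  (gm11, gi11),
  (gm12, gi12),
  (gm13, gi13),
  (gm14, gi14),
  (gm15, gi15),
  (gm16, gi16),
  (gm17, gi17),
  (gm18, gi18),
  (gm19, gi19),
  (gm20, gi20),
  (gm21, gi21),
  (gm22, gi22),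
  (gm23, gi23),
  (gm24, gi24),
  (gm25, gi25),
  (gm26, gi26),
  (gm27, gi27),
  (gm28, gi28),
  (gm29, gi29),
  (gm30, gi30),
  (gm31, gi31),
  (gm32, gi32),
  (gm33, gi33),
  (gm34, gi34),
  (gm35, gi35),
  (gm36, gi36),
  (gm37, gi37),
  (gm38, gi38),
  (gm39, gi39),
  (gm40, gi40),
  (gm41, gi41),
  (gm42, gi42),
  (gm43, gi43),
  (gm44, gi44),
  (gm45, gi45),
  (gm46, gi46),
  (gm47, gi47),
  (gm48, gi48),
  (gm49, gi49),
  (gm50, gi50),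
  (gm51, gi51),
  (gm52, gi52),
  (gm53, gi53),
  (gm54, gi54),
  (gm55, gi55),
  (gm56, gi56),
  (gm57, gi57),
  (gm58, gi58),
  (gm59, gi59),
  (gm60, gi60),
  (gm61, gi61),
  (gm62, gi62),
  (gm63, gi63),
  (gm64, gi64),
  (gm65, gi65),
  (gm66, gi66),
  (gm67, gi67),
  (gm68, gi68),
  (gm69, gi69),
  (gm70, gi70),
  (gm71, gi71),
  (gm72, gi72),
  (gm73, gi73),
  (gm74, gi74),
  (gm75, gi75),
  (gm76, gi76),
  (gm77, gi77),
  (gm78, gi78),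
  (gm79, gi79),
  (gm80, gi80),
  (gm81, gi81),
  (gm82, gi82),
  (gm83, gi83),
  (gm84, gi84),
  (gm85, gi85),
  (gm86, gi86),
  (gm87, gi87),
  (gm88, gi88),
  (gm89, gi89),
  (gm90, gi90),
  (gm91, gi91),
  (gm92, gi92),
  (gm93, gi93),
  (gm94, gi94),
  (gm95, gi95),
  (gm96, gi96),
  (gm97, gi97),
  (gm98, gi98),
  (gm99, gi99),
  (gm100, gi100),
  (gm101, gi101),
  (gm102, gi102),
  (gm103, gi103),
  (gm104, gi104),
  (gm105, gi105),
  (gm106, gi106),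
  (gm107, gi107),
  (gm108, gi108),
  (gm109, gi109),
  (gm110, gi110),
  (gm111, gi111),
  (gm112, gi112),
  (gm113, gi113),
  (gm114, gi114),
  (gm115, gi115),
  (gm116, gi116),
  (gm117, gi117),
  (gm118, gi118),
  (gm119, gi119)
]


def matList : List (Matrix (Fin 5) (Fin 5) ℤ) := matPairs.map Prod.fst

set_option maxHeartbeats 1000000 in
/-- Arithmetic core: classification of the relevant classes. -/
lemma lemAarith (a b c d e : ℤ)
    (e1 : a * (-a + b) + b * (a - b + c) + c * (b - c + d) + d * (c - d) - e * e = -1)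
    (hs : a + b + c + d + e = 1) :
    (a = -1 ∧ b = 0 ∧ c = 1 ∧ d = 1) ∨
    (a = 0 ∧ b = 0 ∧ c = 0 ∧ d = 0) ∨
    (a = 0 ∧ b = 0 ∧ c = 0 ∧ d = 1) ∨
    (a = 0 ∧ b = 0 ∧ c = 1 ∧ d = 0) ∨
    (a = 0 ∧ b = 0 ∧ c = 1 ∧ d = 1) ∨
    (a = 0 ∧ b = 1 ∧ c = 0 ∧ d = 0) ∨
    (a = 0 ∧ b = 1 ∧ c = 1 ∧ d = 0) ∨
    (a = 1 ∧ b = 0 ∧ c = 0 ∧ d = 0) ∨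
    (a = 1 ∧ b = 1 ∧ c = 0 ∧ d = -1) ∨
    (a = 1 ∧ b = 1 ∧ c = 0 ∧ d = 0) := by
  have key : 15 * (2*a + c + d - 1)^2 + 15 * (2*b + d - 1)^2 + 5 * (3*c - d - 1)^2
      + (5*d - 1)^2 = 36 := by
    linear_combination (-30 : ℤ) * e1 - (30 * (e - a - b - c - d + 1)) * hs
  have F2 : 2 * (a*a + b*b + c*c + d*d + a*c + a*d + b*d) = 2 * (a + b + c + d) := by
    linear_combination (-1 : ℤ) * e1 - (e - a - b - c - d + 1) * hs
  have hd1 : 5 * d ≤ 7 := by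
    nlinarith [key, sq_nonneg (2*a + c + d - 1), sq_nonneg (2*b + d - 1),
      sq_nonneg (3*c - d - 1), sq_nonneg (5*d - 7)]
  have hd0 : -5 ≤ 5 * d := by
    nlinarith [key, sq_nonneg (2*a + c + d - 1), sq_nonneg (2*b + d - 1),
      sq_nonneg (3*c - d - 1), sq_nonneg (5*d + 5)]
  have hZ1 : 10 * (3*c - d - 1) ≤ 27 := by
    nlinarith [key, sq_nonneg (2*a + c + d - 1), sq_nonneg (2*b + d - 1),
      sq_nonneg (5*d - 1), sq_nonneg (3*c - d - 4)]
  have hZ0 : -27 ≤ 10 * (3*c - d - 1) := by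
    nlinarith [key, sq_nonneg (2*a + c + d - 1), sq_nonneg (2*b + d - 1),
      sq_nonneg (5*d - 1), sq_nonneg (3*c - d + 2)]
  have hX1 : 5 * (2*a + c + d - 1) ≤ 8 := by
    nlinarith [key, sq_nonneg (2*b + d - 1), sq_nonneg (3*c - d - 1),
      sq_nonneg (5*d - 1), sq_nonneg (2*a + c + d - 3)]
  have hX0 : -8 ≤ 5 * (2*a + c + d - 1) := by
    nlinarith [key, sq_nonneg (2*b + d - 1), sq_nonneg (3*c - d - 1),
      sq_nonneg (5*d - 1), sq_nonneg (2*a + c + d + 1)]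
  have hY1 : 5 * (2*b + d - 1) ≤ 8 := by
    nlinarith [key, sq_nonneg (2*a + c + d - 1), sq_nonneg (3*c - d - 1),
      sq_nonneg (5*d - 1), sq_nonneg (2*b + d - 3)]
  have hY0 : -8 ≤ 5 * (2*b + d - 1) := by
    nlinarith [key, sq_nonneg (2*a + c + d - 1), sq_nonneg (3*c - d - 1),
      sq_nonneg (5*d - 1), sq_nonneg (2*b + d + 1)]
  clear key e1
  have ha : a = -1 ∨ a = 0 ∨ a = 1 := by omega
  have hb : b = 0 ∨ b = 1 := by omega
  have hc : c = 0 ∨ c = 1 := by omega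
  have hd : d = -1 ∨ d = 0 ∨ d = 1 := by omega
  clear hd1 hd0 hZ1 hZ0 hX1 hX0 hY1 hY0 hs
  rcases ha with rfl | rfl | rfl <;> rcases hb with rfl | rfl <;>
    rcases hc with rfl | rfl <;> rcases hd with rfl | rfl | rfl <;>
    first | decide | omega

lemma vec_ext (v : Fin 5 → ℤ) : v = ![v 0, v 1, v 2, v 3, v 4] := by
  funext i; fin_cases i <;> rfl

lemma lemAmem (v : Fin 5 → ℤ) (h1 : picForm v v = -1) (h2 : picForm v vK = -1) :
    v ∈ Slist := by
  have e1 : v 0 * (-(v 0) + v 1) + v 1 * (v 0 - v 1 + v 2) + v 2 * (v 1 - v 2 + v 3) +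
      v 3 * (v 2 - v 3) - v 4 * v 4 = -1 := by
    rw [picForm_eq, pf] at h1; linarith [h1]
  have hs : v 0 + v 1 + v 2 + v 3 + v 4 = 1 := by
    rw [picForm_vK] at h2; linarith [h2]
  have hv := vec_ext v
  rcases lemAarith (v 0) (v 1) (v 2) (v 3) (v 4) e1 hs with
    h | h | h | h | h | h | h | h | h | h <;>
  · obtain ⟨h0, h1', h2', h3'⟩ := h
    rw [hv, show v 4 = 1 - (v 0 + v 1 + v 2 + v 3) from by omega, h0, h1', h2', h3']
    decide

def colMat (c0 c1 c2 c3 c4 : Fin 5 → ℤ) : Matrix (Fin 5) (Fin 5) ℤ :=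
  Matrix.of fun i j => ![c0, c1, c2, c3, c4] j i

set_option maxRecDepth 100000 in
set_option maxHeartbeats 4000000 in
set_option synthInstance.maxHeartbeats 2000000 in
set_option synthInstance.maxSize 2000 in
lemma lemB : ∀ c0 ∈ Slist, ∀ c1 ∈ Slist, pf c0 c1 = 1 →
    ∀ c2 ∈ Slist, pf c1 c2 = 1 → pf c0 c2 = 0 →
    ∀ c3 ∈ Slist, pf c2 c3 = 1 → pf c0 c3 = 0 → pf c1 c3 = 0 →
    ∀ c4 ∈ Slist, pf c3 c4 = 0 → pf c0 c4 = 0 → pf c1 c4 = 0 → pf c2 c4 = 0 →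
    colMat c0 c1 c2 c3 c4 ∈ matList := by decide

set_option maxRecDepth 100000 in
set_option maxHeartbeats 4000000 in
lemma lemC : ∀ p ∈ matPairs, (p.1 * p.2 = 1 ∧ p.2 * p.1 = 1) ∧
    (p.1ᵀ * _root_.gram * p.1 = _root_.gram ∧ p.1 *ᵥ vK = vK) := by decide

set_option maxRecDepth 100000 in
set_option maxHeartbeats 4000000 in
lemma matList_nodup : matList.Nodup := by decide

lemma form_pres (M : Matrix (Fin 5) (Fin 5) ℤ) (h : Mᵀ * _root_.gram * M = _root_.gram) (x y : Fin 5 → ℤ) :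
    picForm (M *ᵥ x) (M *ᵥ y) = picForm x y := by
  unfold picForm
  rw [Matrix.mulVec_mulVec, Matrix.dotProduct_mulVec,
    show M *ᵥ x = x ᵥ* Mᵀ from (Matrix.vecMul_transpose M x).symm,
    Matrix.vecMul_vecMul, ← Matrix.mul_assoc, h, Matrix.dotProduct_mulVec]

/-- The matrix of a linear equivalence. -/
def keyFun (φ : (Fin 5 → ℤ) ≃ₗ[ℤ] (Fin 5 → ℤ)) : Matrix (Fin 5) (Fin 5) ℤ :=
  LinearMap.toMatrix' (φ : (Fin 5 → ℤ) →ₗ[ℤ] (Fin 5 → ℤ))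

lemma keyFun_inj : Function.Injective keyFun := by
  intro φ ψ h
  exact LinearEquiv.toLinearMap_injective (LinearMap.toMatrix'.injective h)

def del (j : Fin 5) : Fin 5 → ℤ := fun j' => if j' = j then 1 else 0

lemma keyFun_col (φ : (Fin 5 → ℤ) ≃ₗ[ℤ] (Fin 5 → ℤ)) (i j : Fin 5) :
    keyFun φ i j = φ (del j) i := by
  simp only [keyFun, LinearMap.toMatrix'_apply]
  have hd : (Pi.single j (1:ℤ) : Fin 5 → ℤ) = del j := by
    funext j'; simp [del, Pi.single_apply]
  rw [hd]; rfl

lemma keyFun_mem (φ : (Fin 5 → ℤ) ≃ₗ[ℤ] (Fin 5 → ℤ)) (h : IsKIsometry φ) :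
    keyFun φ ∈ matList := by
  obtain ⟨hB, hK⟩ := h
  have hself : ∀ j : Fin 5, picForm (φ (del j)) (φ (del j)) = -1 := by
    intro j; rw [hB, picForm_eq]; fin_cases j <;> decide
  have hKdeg : ∀ j : Fin 5, picForm (φ (del j)) vK = -1 := by
    intro j; rw [← hK, hB, picForm_eq]; fin_cases j <;> decide
  have hmem : ∀ j : Fin 5, φ (del j) ∈ Slist := fun j =>
    lemAmem _ (hself j) (hKdeg j)
  have cross : ∀ i j : Fin 5, pf (φ (del i)) (φ (del j)) = pf (del i) (del j) := by
    intro i j; rw [← picForm_eq, ← picForm_eq, hB]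
  have hcol : colMat (φ (del 0)) (φ (del 1)) (φ (del 2)) (φ (del 3)) (φ (del 4)) ∈ matList := by
    apply lemB _ (hmem 0) _ (hmem 1) _ _ (hmem 2) _ _ _ (hmem 3) _ _ _ _ (hmem 4) <;>
    · rw [cross]; decide
  have heq : keyFun φ = colMat (φ (del 0)) (φ (del 1)) (φ (del 2)) (φ (del 3)) (φ (del 4)) := by
    ext i j
    rw [keyFun_col]
    fin_cases j <;> rfl
  rw [heq]; exact hcol

lemma exists_iso_of_mem (M : Matrix (Fin 5) (Fin 5) ℤ) (hM : M ∈ matList) :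
    ∃ φ : (Fin 5 → ℤ) ≃ₗ[ℤ] (Fin 5 → ℤ), IsKIsometry φ ∧ keyFun φ = M := by
  obtain ⟨p, hp, rfl⟩ := List.mem_map.1 hM
  obtain ⟨⟨hMN, hNM⟩, hG, hKfix⟩ := lemC p hp
  refine ⟨LinearEquiv.ofLinear p.1.mulVecLin p.2.mulVecLin ?_ ?_, ⟨?_, ?_⟩, ?_⟩
  · rw [← Matrix.mulVecLin_mul, hMN, Matrix.mulVecLin_one]
  · rw [← Matrix.mulVecLin_mul, hNM, Matrix.mulVecLin_one]
  · intro x y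
    exact form_pres p.1 hG x y
  · exact hKfix
  · show LinearMap.toMatrix' p.1.mulVecLin = p.1
    rw [← Matrix.toLin'_apply', LinearMap.toMatrix'_toLin']

def matFinset : Finset (Matrix (Fin 5) (Fin 5) ℤ) :=
  ⟨(matList : Multiset _), Multiset.coe_nodup.mpr matList_nodup⟩

lemma matFinset_card : matFinset.card = 120 := by decide

def isoMap (p : {φ : (Fin 5 → ℤ) ≃ₗ[ℤ] (Fin 5 → ℤ) // IsKIsometry φ}) : ↥matFinset :=
  ⟨keyFun p.1, Finset.mem_mk.mpr (Multiset.mem_coe.mpr (keyFun_mem p.1 p.2))⟩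

lemma isoMap_bij : Function.Bijective isoMap := by
  constructor
  · intro p q h
    exact Subtype.ext (keyFun_inj (congrArg Subtype.val h))
  · rintro ⟨M, hM⟩
    have hM' : M ∈ matList := Multiset.mem_coe.mp (Finset.mem_mk.mp hM)
    obtain ⟨φ, hφ, hkey⟩ := exists_iso_of_mem M hM'
    exact ⟨⟨φ, hφ⟩, Subtype.ext hkey⟩

lemma card_isos : Nat.card {φ : (Fin 5 → ℤ) ≃ₗ[ℤ] (Fin 5 → ℤ) // IsKIsometry φ} = 120 := by
  rw [Nat.card_eq_of_bijective isoMap isoMap_bij, Nat.card_eq_finsetCard, matFinset_card]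

lemma stdSys_inj (φ ψ : (Fin 5 → ℤ) ≃ₗ[ℤ] (Fin 5 → ℤ))
    (h : (fun i => φ (stdSys i)) = (fun i => ψ (stdSys i))) : φ = ψ := by
  apply LinearEquiv.toLinearMap_injective
  apply Module.Basis.ext (Pi.basisFun ℤ (Fin 5))
  intro i
  have key5 : ∀ i : Fin 5, Pi.single i (1 : ℤ) = stdSys (![1, 2, 3, 4, 6] i) := by decide
  rw [Pi.basisFun_apply, key5 i]
  exact congrFun h (![1, 2, 3, 4, 6] i)

lemma toric_std : IsToricSystem stdSys := by
  refine ⟨by norm_num, ?_, ?_, ?_⟩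
  · simp only [picForm_eq]; decide
  · simp only [picForm_eq]; decide
  · decide

/-- On `X = TV(-2,-1,-1,-1,-1,-2,-1)`: (i) the group of `K`-isometries is finite
of order `120`; (ii) `(D₁, …, D₇)` is a toric system of length `7`;
(iii) a `K`-isometry is determined by its values on `(D₁, …, D₇)`, so the orbit
of the standard toric system consists of exactly `120` distinct toric systems. -/

theorem kIsometry_orbit_of_standard_toricSystem :
    Set.Finite {φ : (Fin 5 → ℤ) ≃ₗ[ℤ] (Fin 5 → ℤ) | IsKIsometry φ} ∧
    Nat.card {φ : (Fin 5 → ℤ) ≃ₗ[ℤ] (Fin 5 → ℤ) // IsKIsometry φ} = 120 ∧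
    IsToricSystem stdSys ∧
    (∀ φ ψ : (Fin 5 → ℤ) ≃ₗ[ℤ] (Fin 5 → ℤ), IsKIsometry φ → IsKIsometry ψ →
      (fun i => φ (stdSys i)) = (fun i => ψ (stdSys i)) → φ = ψ) ∧
    Set.ncard {A : Fin 7 → Fin 5 → ℤ |
      ∃ φ : (Fin 5 → ℤ) ≃ₗ[ℤ] (Fin 5 → ℤ), IsKIsometry φ ∧
        A = fun i => φ (stdSys i)} = 120 := by
  have hfin : Finite {φ : (Fin 5 → ℤ) ≃ₗ[ℤ] (Fin 5 → ℤ) // IsKIsometry φ} :=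
    Finite.of_injective isoMap isoMap_bij.1
  refine ⟨?_, card_isos, toric_std, ?_, ?_⟩
  · have : Finite ↥{φ : (Fin 5 → ℤ) ≃ₗ[ℤ] (Fin 5 → ℤ) | IsKIsometry φ} := hfin
    exact Set.toFinite _
  · intro φ ψ _ _ h
    exact stdSys_inj φ ψ h
  · have hset : {A : Fin 7 → Fin 5 → ℤ |
        ∃ φ : (Fin 5 → ℤ) ≃ₗ[ℤ] (Fin 5 → ℤ), IsKIsometry φ ∧
          A = fun i => φ (stdSys i)} =
        Set.range (fun p : {φ : (Fin 5 → ℤ) ≃ₗ[ℤ] (Fin 5 → ℤ) // IsKIsometry φ} =>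
          (fun i => p.1 (stdSys i))) := by
      ext A
      constructor
      · rintro ⟨φ, hφ, rfl⟩; exact ⟨⟨φ, hφ⟩, rfl⟩
      · rintro ⟨⟨φ, hφ⟩, rfl⟩; exact ⟨φ, hφ, rfl⟩
    have hginj : Function.Injective
        (fun p : {φ : (Fin 5 → ℤ) ≃ₗ[ℤ] (Fin 5 → ℤ) // IsKIsometry φ} =>
          (fun i => p.1 (stdSys i))) := by
      intro p q h
      exact Subtype.ext (stdSys_inj _ _ h)
    rw [hset, ← Nat.card_coe_set_eq, Nat.card_range_of_injective hginj, card_isos]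
end

section
/- In (L, B, k) as below, let A = (A₁, …, A₇) be the sequence whose coordinate vectors in the basis (D₂, D₃, D₄, D₅, D₇) are A₁ = (0,−1,0,0,1), A₂ = (1,1,0,0,−1), A₃ = (−1,0,1,1,0), A₄ = (1,1,0,−1,0), A₅ = (0,0,1,1,−1), A₆ = (0,0,−1,0,1), A₇ = (0,1,1,0,−1). Then A is a toric system of length 7 in (L, B, k), and there exists a K-isometry φ of (L, B, k) with A_i = φ(D_i) for all i = 1, …, 7. -/
/-- The non-constructible exceptional toric system `A = (A₁, …, A₇)`, given by
its coordinate vectors in the basis `(D₂, D₃, D₄, D₅, D₇)`. -/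
def exSys : Fin 7 → Fin 5 → ℤ :=
  ![![0, -1, 0, 0, 1], ![1, 1, 0, 0, -1], ![-1, 0, 1, 1, 0], ![1, 1, 0, -1, 0],
    ![0, 0, 1, 1, -1], ![0, 0, -1, 0, 1], ![0, 1, 1, 0, -1]]

def Mmat : Matrix (Fin 5) (Fin 5) ℤ :=
  !![1, -1, 1, 0, 0;
     1, 0, 1, 0, 1;
     0, 1, 0, 1, 1;
     0, 1, -1, 1, 0;
     -1, 0, 0, -1, -1]

def Nmat : Matrix (Fin 5) (Fin 5) ℤ :=
  !![0, 1, -1, 1, 0;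
     0, 1, 0, 1, 1;
     1, 0, 1, 0, 1;
     1, -1, 1, 0, 0;
     -1, 0, 0, -1, -1]

lemma MN : Mmat * Nmat = 1 := by decide
lemma NM : Nmat * Mmat = 1 := by decide

def phi : (Fin 5 → ℤ) ≃ₗ[ℤ] (Fin 5 → ℤ) :=
  LinearEquiv.ofLinear (Matrix.toLin' Mmat) (Matrix.toLin' Nmat)
    (by rw [← Matrix.toLin'_mul, MN, Matrix.toLin'_one])
    (by rw [← Matrix.toLin'_mul, NM, Matrix.toLin'_one])

lemma phi_apply (x : Fin 5 → ℤ) : phi x = Mmat.mulVec x := Matrix.toLin'_apply _ _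

lemma key : Mmat.transpose * (gram * Mmat) = gram := by decide

/-- The sequence `A` is a toric system of length `7` on
`X = TV(-2,-1,-1,-1,-1,-2,-1)`, and there is a `K`-isometry `φ` with
`A_i = φ(D_i)` for all `i`. -/
theorem exceptional_system_in_orbit :
    IsToricSystem exSys ∧
    ∃ φ : (Fin 5 → ℤ) ≃ₗ[ℤ] (Fin 5 → ℤ), IsKIsometry φ ∧
      ∀ i : Fin 7, exSys i = φ (stdSys i) := by
  refine ⟨⟨by norm_num, by decide, by decide, by decide⟩, phi, ⟨?_, ?_⟩, ?_⟩
  · intro x y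
    simp only [phi_apply, picForm]
    rw [Matrix.mulVec_mulVec, Matrix.dotProduct_mulVec, ← Matrix.vecMul_transpose,
      Matrix.vecMul_vecMul, key, ← Matrix.dotProduct_mulVec]
  · rw [phi_apply]; decide
  · intro i; rw [phi_apply]; fin_cases i <;> decide
end
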